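/- The inductance map e, sending an admissible linear chain A = [a_1,...,a_r] to d(Ā)/d(A), is a bijection from the set of all admissible linear chains onto the set of rational numbers in the open interval (0,1). -/

import Mathlib

/-- The tridiagonal matrix of a linear chain: diagonal entries from the list,
entries `-1` on the first sub- and super-diagonals, `0` elsewhere. -/
def chainMatrix (l : List ℤ) : Matrix (Fin l.length) (Fin l.length) ℤ :=
  fun i j =>
    if i = j then l.get i
    else if (i : ℕ) + 1 = (j : ℕ) ∨ (j : ℕ) + 1 = (i : ℕ) then -1 else 0

/-- The discriminant of a linear chain. -/
def disc (l : List ℤ) : ℤ := (chainMatrix l).det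

/-- A linear chain is admissible if it is nonempty and all entries are ≥ 2. -/
def Admissible (l : List ℤ) : Prop := l ≠ [] ∧ ∀ a ∈ l, 2 ≤ a

/-- The inductance of a chain. -/
def ind (l : List ℤ) : ℚ := (disc l.tail : ℚ) / (disc l : ℚ)

lemma disc_nil : disc [] = 1 := by
  simp [disc, Matrix.det_isEmpty]

lemma disc_single (a : ℤ) : disc [a] = a := by
  have h : (chainMatrix [a] : Matrix (Fin 1) (Fin 1) ℤ).det
      = chainMatrix [a] (0:Fin 1) (0:Fin 1) := Matrix.det_fin_one _
  simp [disc, h, chainMatrix]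

lemma disc_cons_cons (a b : ℤ) (t : List ℤ) :
    disc (a :: b :: t) = a * disc (b :: t) - disc t := by
  set n := t.length with hn
  let Mm : Matrix (Fin (n+2)) (Fin (n+2)) ℤ := chainMatrix (a :: b :: t)
  have hdet : disc (a :: b :: t) = Mm.det := rfl
  rw [hdet, Matrix.det_succ_row_zero]
  rw [Fin.sum_univ_succ, Fin.sum_univ_succ]
  have hrest : ∀ j : Fin n, Mm 0 j.succ.succ = 0 := by
    intro j
    simp [Mm, chainMatrix, Fin.ext_iff]
  simp only [hrest, mul_zero, zero_mul, Finset.sum_const_zero, add_zero]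
  have h00 : Mm 0 0 = a := by simp [Mm, chainMatrix]
  have h01 : Mm 0 (Fin.succ 0) = -1 := by simp [Mm, chainMatrix, Fin.ext_iff]
  have hsub0 : Mm.submatrix Fin.succ (Fin.succAbove 0) = chainMatrix (b :: t) := by
    ext i j
    simp only [Matrix.submatrix_apply, Fin.succAbove_zero, Mm, chainMatrix]
    rcases eq_or_ne i j with h | h
    · subst h; simp
    · rw [if_neg (by simpa using h), if_neg h]
      simp [Fin.ext_iff]
  rw [h00, h01, hsub0]
  set N : Matrix (Fin (n+1)) (Fin (n+1)) ℤ := Mm.submatrix Fin.succ (Fin.succ 0).succAbove with hN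
  have hNrest : ∀ i : Fin n, N i.succ 0 = 0 := by
    intro i
    simp [N, Mm, chainMatrix, Fin.ext_iff, Fin.succAbove, Fin.lt_def]
  have hN00 : N 0 0 = -1 := by
    simp [N, Mm, chainMatrix, Fin.ext_iff, Fin.succAbove, Fin.lt_def]
  have hNsub : N.submatrix (Fin.succAbove 0) Fin.succ = chainMatrix t := by
    ext i j
    have hs : ∀ k : Fin n, (((Fin.succ 0 : Fin (n+2)).succAbove k.succ : Fin (n+2)) : ℕ) = (k : ℕ) + 2 := by
      intro k
      simp [Fin.succAbove, Fin.lt_def]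
    simp only [Matrix.submatrix_apply, Fin.succAbove_zero, N, Mm, chainMatrix]
    rcases eq_or_ne i j with h | h
    · subst h
      rw [if_pos (by simp [Fin.ext_iff, hs]), if_pos rfl]
      rfl
    · rw [if_neg (by simp [Fin.ext_iff, hs]; exact fun hh => absurd (Fin.ext hh) h), if_neg h]
      have := hs j
      have := hs i
      by_cases hij : (i:ℕ) + 1 = (j:ℕ) ∨ (j:ℕ)+1 = (i:ℕ)
      · rw [if_pos, if_pos hij]
        simp [Fin.ext_iff, hs]
        omega
      · rw [if_neg, if_neg hij]
        simp [Fin.ext_iff, hs]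
        omega
  have hNdet : N.det = - disc t := by
    rw [Matrix.det_succ_column_zero, Fin.sum_univ_succ]
    simp only [hNrest, mul_zero, zero_mul, Finset.sum_const_zero, add_zero, hN00, hNsub]
    show (-1)^((0:Fin (n+1)):ℕ) * -1 * disc t = - disc t
    simp
  rw [hNdet]
  show (-1)^((0:Fin (n+2)):ℕ) * a * disc (b::t) + (-1)^((Fin.succ 0 : Fin (n+2)):ℕ) * -1 * (- disc t) = _
  simp
  ring

/-- key positivity / monotonicity -/
lemma disc_tail_lt : ∀ l : List ℤ, (∀ a ∈ l, 2 ≤ a) → l ≠ [] →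
    0 < disc l.tail ∧ disc l.tail < disc l := by
  intro l
  induction l with
  | nil => intro _ h; exact absurd rfl h
  | cons a t ih =>
    intro hall _
    have ha : 2 ≤ a := hall a (by simp)
    match t with
    | [] =>
      refine ⟨by simp [disc_nil], ?_⟩
      simp only [List.tail_cons, disc_nil, disc_single]
      omega
    | b :: t' =>
      have ht : ∀ x ∈ b :: t', 2 ≤ x := fun x hx => hall x (by simp [hx])
      obtain ⟨h1, h2⟩ := ih ht (by simp)
      simp only [List.tail_cons] at *
      constructor
      · linarith
      · rw [disc_cons_cons]
        nlinarith

lemma disc_pos (l : List ℤ) (h : Admissible l) : 0 < disc l := by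
  obtain ⟨h1, h2⟩ := disc_tail_lt l h.2 h.1
  linarith

lemma ind_mem (l : List ℤ) (h : Admissible l) : 0 < ind l ∧ ind l < 1 := by
  obtain ⟨h1, h2⟩ := disc_tail_lt l h.2 h.1
  have hp : (0:ℚ) < (disc l : ℚ) := by exact_mod_cast lt_trans h1 h2
  constructor
  · rw [ind]
    apply div_pos _ hp
    exact_mod_cast h1
  · rw [ind, div_lt_one hp]
    exact_mod_cast h2

lemma ind_singleton (a : ℤ) : ind [a] = ((a : ℚ))⁻¹ := by
  rw [ind, show ([a] : List ℤ).tail = [] from rfl, disc_nil, disc_single]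
  rw [inv_eq_one_div]
  norm_num

lemma ind_cons (a : ℤ) (ha : 2 ≤ a) (l : List ℤ) (h : Admissible l) :
    ind (a :: l) = ((a : ℚ) - ind l)⁻¹ := by
  obtain ⟨b, t, rfl⟩ := List.exists_cons_of_ne_nil h.1
  obtain ⟨h1, h2⟩ := disc_tail_lt (b :: t) h.2 h.1
  simp only [List.tail_cons] at h1 h2
  have hX : (0:ℚ) < (disc (b :: t) : ℚ) := by exact_mod_cast lt_trans h1 h2
  have h1Q : (0:ℚ) < (disc t : ℚ) := by exact_mod_cast h1
  have h2Q : (disc t : ℚ) < (disc (b :: t) : ℚ) := by exact_mod_cast h2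
  have hD : (0:ℚ) < (a : ℚ) * (disc (b :: t) : ℚ) - (disc t : ℚ) := by
    have : (2:ℚ) ≤ (a:ℚ) := by exact_mod_cast ha
    nlinarith
  rw [ind, ind, List.tail_cons, disc_cons_cons, List.tail_cons]
  push_cast
  have key : (a:ℚ) - (disc t : ℚ) / (disc (b :: t) : ℚ)
      = ((a:ℚ) * (disc (b :: t) : ℚ) - (disc t : ℚ)) / (disc (b :: t) : ℚ) := by
    field_simp
  rw [key, inv_div]

lemma admissible_tail {a : ℤ} {c : ℤ} {t : List ℤ} (h : Admissible (a :: c :: t)) :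
    Admissible (c :: t) :=
  ⟨by simp, fun x hx => h.2 x (by simp at hx ⊢; tauto)⟩

lemma ind_inj : ∀ l1 l2 : List ℤ, Admissible l1 → Admissible l2 → ind l1 = ind l2 → l1 = l2 := by
  intro l1
  induction l1 with
  | nil => intro l2 h1 _ _; exact absurd rfl h1.1
  | cons a t ih =>
    intro l2 h1 h2 heq
    obtain ⟨b, t2, rfl⟩ := List.exists_cons_of_ne_nil h2.1
    have ha : 2 ≤ a := h1.2 a (by simp)
    have hb : 2 ≤ b := h2.2 b (by simp)
    cases t with
    | nil =>
      cases t2 with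
      | nil =>
        rw [ind_singleton, ind_singleton, inv_inj] at heq
        have : a = b := by exact_mod_cast heq
        rw [this]
      | cons c2 t2' =>
        exfalso
        have hadm2 : Admissible (c2 :: t2') := admissible_tail h2
        obtain ⟨hq0, hq1⟩ := ind_mem _ hadm2
        rw [ind_singleton, ind_cons b hb _ hadm2, inv_inj] at heq
        have h01 : (0:ℚ) < ((b - a : ℤ):ℚ) ∧ ((b - a : ℤ):ℚ) < 1 := by
          push_cast
          constructor <;> linarith
        have : (0:ℤ) < b - a ∧ (b - a : ℤ) < 1 := ⟨by exact_mod_cast h01.1, by exact_mod_cast h01.2⟩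
        omega
    | cons c t' =>
      have hadm1 : Admissible (c :: t') := admissible_tail h1
      obtain ⟨hq10, hq11⟩ := ind_mem _ hadm1
      cases t2 with
      | nil =>
        exfalso
        rw [ind_singleton, ind_cons a ha _ hadm1, inv_inj] at heq
        have h01 : (0:ℚ) < ((a - b : ℤ):ℚ) ∧ ((a - b : ℤ):ℚ) < 1 := by
          push_cast
          constructor <;> linarith
        have : (0:ℤ) < a - b ∧ (a - b : ℤ) < 1 := ⟨by exact_mod_cast h01.1, by exact_mod_cast h01.2⟩
        omega
      | cons c2 t2' =>
        have hadm2 : Admissible (c2 :: t2') := admissible_tail h2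
        obtain ⟨hq20, hq21⟩ := ind_mem _ hadm2
        rw [ind_cons a ha _ hadm1, ind_cons b hb _ hadm2, inv_inj] at heq
        have hab : a = b := by
          have hlt : (-1:ℚ) < ((a - b : ℤ):ℚ) ∧ ((a - b : ℤ):ℚ) < 1 := by
            push_cast
            constructor <;> linarith
          have : (-1:ℤ) < a - b ∧ (a - b : ℤ) < 1 :=
            ⟨by exact_mod_cast hlt.1, by exact_mod_cast hlt.2⟩
          omega
        subst hab
        have heq2 : ind (c :: t') = ind (c2 :: t2') := by
          have : (a:ℚ) - ind (c :: t') = (a:ℚ) - ind (c2 :: t2') := heq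
          linarith
        rw [ih (c2 :: t2') hadm1 hadm2 heq2]

lemma ind_surj : ∀ n : ℕ, ∀ q : ℚ, q.den = n → 0 < q → q < 1 →
    ∃ l : List ℤ, Admissible l ∧ ind l = q := by
  intro n
  induction n using Nat.strong_induction_on with
  | _ n ih =>
    intro q hden hq0 hq1
    have hinv : 1 < q⁻¹ := (one_lt_inv₀ hq0).mpr hq1
    set a : ℤ := ⌈q⁻¹⌉ with haDef
    have ha2 : 2 ≤ a := by
      have : (1:ℤ) < a := Int.lt_ceil.mpr (by exact_mod_cast hinv)
      omega
    by_cases hc : (a : ℚ) = q⁻¹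
    · refine ⟨[a], ⟨by simp, ?_⟩, ?_⟩
      · intro x hx
        simp at hx
        omega
      · rw [ind_singleton, hc, inv_inv]
    · set q' : ℚ := (a:ℚ) - q⁻¹ with hq'def
      have hq'0 : 0 < q' := sub_pos.mpr (lt_of_le_of_ne (Int.le_ceil _) (fun h => hc h.symm))
      have hq'1 : q' < 1 := by
        have := Int.ceil_lt_add_one (q⁻¹)
        rw [hq'def]
        linarith
      have hnum0 : (0:ℤ) < q.num := Rat.num_pos.mpr hq0
      have hnumQ : ((q.num:ℚ)) ≠ 0 := by
        exact_mod_cast hnum0.ne'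
      have hdenQ : ((q.den:ℚ)) ≠ 0 := Nat.cast_ne_zero.mpr q.den_nz
      have hq_eq : (q.num : ℚ) = q * q.den := (Rat.mul_den_eq_num q).symm
      have hinvnum : q⁻¹ * (q.num : ℚ) = (q.den : ℚ) := by
        rw [hq_eq, ← mul_assoc, inv_mul_cancel₀ hq0.ne', one_mul]
      have hrepr : q' = ((a * q.num - q.den : ℤ):ℚ) / ((q.num : ℤ):ℚ) := by
        rw [eq_div_iff hnumQ, hq'def, sub_mul, hinvnum]
        push_cast
        ring
      have hden' : q'.den < n := by
        have hd : ((q'.den : ℤ)) ∣ q.num := by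
          rw [hrepr, ← Rat.divInt_eq_div]
          exact Rat.den_dvd _ _
        have hle : (q'.den : ℤ) ≤ q.num := Int.le_of_dvd hnum0 hd
        have hlt : q.num < (q.den : ℤ) := Rat.num_lt_denom_iff.mpr hq1
        omega
      obtain ⟨l, hl, hil⟩ := ih q'.den hden' q' rfl hq'0 hq'1
      refine ⟨a :: l, ⟨by simp, ?_⟩, ?_⟩
      · intro x hx
        rcases List.mem_cons.mp hx with h | h
        · omega
        · exact hl.2 x h
      · rw [ind_cons a ha2 l hl, hil, hq'def, sub_sub_cancel, inv_inv]

theorem ind_bijOn :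
    Set.BijOn ind {l : List ℤ | Admissible l} {q : ℚ | 0 < q ∧ q < 1} := by
  refine ⟨?_, ?_, ?_⟩
  · intro l hl
    exact ind_mem l hl
  · intro l1 h1 l2 h2 heq
    exact ind_inj l1 l2 h1 h2 heq
  · intro q hq
    obtain ⟨l, hl, hil⟩ := ind_surj q.den q rfl hq.1 hq.2
    exact ⟨l, hl, hil⟩
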